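/- Let m ∈ ℕ and let 0 = x_0 ≤ x_1 ≤ … ≤ x_m be reals with x_i − x_{i−1} ≤ 1 for each 1 ≤ i ≤ m. Then Σ_{i=1}^{m} (x_i − x_{i−1})/(1+x_i) ≥ (1/2)·ln(1+x_m). -/

import Mathlib

lemma key_step (a d : ℝ) (ha : 0 ≤ a) (hd : 0 ≤ d) (hd1 : d ≤ 1) :
    (1 / 2) * Real.log (1 + a + d) ≤ (1 / 2) * Real.log (1 + a) + d / (1 + a + d) := by
  have h1 : (0:ℝ) < 1 + a := by linarith
  have h2 : (0:ℝ) < 1 + a + d := by linarith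
  have hlog' : Real.log (1 + a + d) - Real.log (1 + a) ≤ d / (1 + a) := by
    have hle := Real.log_le_sub_one_of_pos (show (0:ℝ) < (1 + a + d) / (1 + a) by positivity)
    rw [Real.log_div (ne_of_gt h2) (ne_of_gt h1)] at hle
    have heq : (1 + a + d) / (1 + a) - 1 = d / (1 + a) := by field_simp; ring
    linarith
  have hdd : d / (1 + a) ≤ 2 * d / (1 + a + d) := by
    rw [div_le_div_iff₀ h1 h2]
    nlinarith
  have h3 : 2 * d / (1 + a + d) = 2 * (d / (1 + a + d)) := by ring
  linarith

/-- For `0 = x_0 ≤ x_1 ≤ … ≤ x_m` with unit increments,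
`Σ_{i=1}^{m} (x_i − x_{i−1})/(1+x_i) ≥ (1/2)·ln(1+x_m)`. -/
theorem sum_increments_lower_bound (m : ℕ) (x : ℕ → ℝ) (h0 : x 0 = 0)
    (hmono : ∀ i, 1 ≤ i → i ≤ m → x (i - 1) ≤ x i)
    (hstep : ∀ i, 1 ≤ i → i ≤ m → x i - x (i - 1) ≤ 1) :
    (1 / 2) * Real.log (1 + x m) ≤
      ∑ i ∈ Finset.Icc 1 m, (x i - x (i - 1)) / (1 + x i) := by
  induction m with
  | zero => simp [h0]
  | succ n ih =>
    have hnonneg : ∀ i, i ≤ n + 1 → 0 ≤ x i := by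
      intro i hi
      induction i with
      | zero => simp [h0]
      | succ k ihk =>
        have hk : k ≤ n + 1 := Nat.le_of_succ_le hi
        have := hmono (k + 1) (Nat.le_add_left 1 k) hi
        simpa using le_trans (ihk hk) this
    have hxn : 0 ≤ x n := hnonneg n (Nat.le_succ n)
    have hmono' : ∀ i, 1 ≤ i → i ≤ n → x (i - 1) ≤ x i := fun i h1 h2 =>
      hmono i h1 (Nat.le_succ_of_le h2)
    have hstep' : ∀ i, 1 ≤ i → i ≤ n → x i - x (i - 1) ≤ 1 := fun i h1 h2 =>
      hstep i h1 (Nat.le_succ_of_le h2)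
    have ihn := ih hmono' hstep'
    rw [Finset.sum_Icc_succ_top (by omega : 1 ≤ n + 1)]
    have hmn : x (n + 1 - 1) = x n := by norm_num
    have hd0 : 0 ≤ x (n + 1) - x n := by
      have := hmono (n + 1) (by omega) (le_refl _); rw [hmn] at this; linarith
    have hd1 : x (n + 1) - x n ≤ 1 := by
      have := hstep (n + 1) (by omega) (le_refl _); rwa [hmn] at this
    have hkey := key_step (x n) (x (n + 1) - x n) hxn hd0 hd1
    have heq : 1 + x n + (x (n + 1) - x n) = 1 + x (n + 1) := by ring
    rw [heq] at hkey
    rw [hmn]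
    linarith
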